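/- The symmetrization map β : S(g) → U(g) restricts to a linear isomorphism from the g-invariants I = S(g)^g onto the center Z = U(g)^g. -/

import Mathlib

lemma comm_expand {R : Type*} [Ring R] :
    ∀ (n : ℕ) (y : Fin n → R) (a : R),
      a * (List.ofFn y).prod - (List.ofFn y).prod * a
        = ∑ i, (List.ofFn (Function.update y i (a * y i - y i * a))).prod := by
  intro n
  induction n with
  | zero => intro y a; simp
  | succ n ih =>
    intro y a
    rw [List.ofFn_succ, List.prod_cons, Fin.sum_univ_succ]
    have e0 : (fun i : Fin n => Function.update y 0 (a * y 0 - y 0 * a) i.succ)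
        = fun i : Fin n => y i.succ := by
      funext i; exact Function.update_of_ne (Fin.succ_ne_zero i) _ _
    have h0 : (List.ofFn (Function.update y 0 (a * y 0 - y 0 * a))).prod
        = (a * y 0 - y 0 * a) * (List.ofFn fun i : Fin n => y i.succ).prod := by
      rw [List.ofFn_succ, List.prod_cons, Function.update_self, e0]
    have hs : ∀ k : Fin n,
        (List.ofFn (Function.update y k.succ (a * y k.succ - y k.succ * a))).prod
          = y 0 * (List.ofFn (Function.update (fun i : Fin n => y i.succ) k
              (a * y k.succ - y k.succ * a))).prod := by
      intro k
      have e : (fun i : Fin n => Function.update y k.succ (a * y k.succ - y k.succ * a) i.succ)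
          = Function.update (fun i : Fin n => y i.succ) k (a * y k.succ - y k.succ * a) := by
        funext i
        by_cases h : i = k
        · subst h; simp
        · rw [Function.update_of_ne (fun hc => h (Fin.succ_injective _ hc)),
            Function.update_of_ne h]
      rw [List.ofFn_succ, List.prod_cons,
        Function.update_of_ne (Fin.succ_ne_zero k).symm, e]
    rw [h0]
    simp only [hs]
    rw [← Finset.mul_sum, ← ih (fun i => y i.succ) a]
    noncomm_ring

lemma deriv_prod {K A : Type*} [CommRing K] [CommRing A] [Algebra K A]
    (D : Derivation K A A) :
    ∀ (n : ℕ) (f : Fin n → A),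
      D (∏ i, f i) = ∑ i, ∏ j, Function.update f i (D (f i)) j := by
  intro n
  induction n with
  | zero => intro f; simp
  | succ n ih =>
    intro f
    rw [Fin.prod_univ_succ, Derivation.leibniz, smul_eq_mul, smul_eq_mul,
      ih (fun i => f i.succ), Fin.sum_univ_succ]
    have h0 : ∏ j, Function.update f 0 (D (f 0)) j
        = D (f 0) * ∏ i : Fin n, f i.succ := by
      have e0 : (fun i : Fin n => Function.update f 0 (D (f 0)) i.succ)
          = fun i : Fin n => f i.succ := by
        funext i; exact Function.update_of_ne (Fin.succ_ne_zero i) _ _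
      rw [Fin.prod_univ_succ, Function.update_self, e0]
    have hs : ∀ k : Fin n,
        ∏ j, Function.update f k.succ (D (f k.succ)) j
          = f 0 * ∏ j, Function.update (fun i : Fin n => f i.succ) k (D (f k.succ)) j := by
      intro k
      have e : (fun i : Fin n => Function.update f k.succ (D (f k.succ)) i.succ)
          = Function.update (fun i : Fin n => f i.succ) k (D (f k.succ)) := by
        funext i
        by_cases h : i = k
        · subst h; simp
        · rw [Function.update_of_ne (fun hc => h (Fin.succ_injective _ hc)),
            Function.update_of_ne h]
      rw [Fin.prod_univ_succ, Function.update_of_ne (Fin.succ_ne_zero k).symm, e]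
    rw [h0]
    simp only [hs]
    rw [← Finset.mul_sum]
    ring

section
variable {K : Type*} [Field K] [CharZero K]
    {g : Type*} [LieRing g] [LieAlgebra K g] [FiniteDimensional K g]
    {ι : Type*} [Fintype ι] (B : Module.Basis ι K g)

noncomputable def linB : g →ₗ[K] MvPolynomial ι K where
  toFun y := ∑ j, B.repr y j • MvPolynomial.X j
  map_add' y z := by simp [add_smul, Finset.sum_add_distrib]
  map_smul' c y := by simp [mul_smul, Finset.smul_sum]

lemma linB_apply (y : g) : linB B y = ∑ j, B.repr y j • MvPolynomial.X j := rfl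

lemma linB_basis [DecidableEq ι] (k : ι) : linB B (B k) = MvPolynomial.X k := by
  rw [linB_apply, Module.Basis.repr_self]
  rw [Finset.sum_eq_single k (fun b _ hb => by
    rw [Finsupp.single_apply, if_neg (Ne.symm hb), zero_smul]) (by simp)]
  simp

lemma span_prod_linB_top :
    Submodule.span K {q : MvPolynomial ι K |
      ∃ (n : ℕ) (x : Fin n → g), q = ∏ i, linB B (x i)} = ⊤ := by
  classical
  set T := {q : MvPolynomial ι K | ∃ (n : ℕ) (x : Fin n → g), q = ∏ i, linB B (x i)}
  rw [eq_top_iff]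
  intro p _
  induction p using MvPolynomial.induction_on with
  | C r =>
    have h1 : (1 : MvPolynomial ι K) ∈ T := ⟨0, Fin.elim0, by simp⟩
    have : MvPolynomial.C (σ := ι) r = r • (1 : MvPolynomial ι K) := by
      simp [MvPolynomial.smul_eq_C_mul]
    rw [this]
    exact Submodule.smul_mem _ _ (Submodule.subset_span h1)
  | add p q hp hq => exact Submodule.add_mem _ (hp trivial) (hq trivial)
  | mul_X p k hp =>
    refine Submodule.span_induction
      (p := fun q _ => q * MvPolynomial.X k ∈ Submodule.span K T)
      (fun t ht => ?_) (by simp)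
      (fun u v _ _ hu hv => by show (u + v) * _ ∈ _; rw [add_mul]; exact Submodule.add_mem _ hu hv)
      (fun c u _ hu => by show (c • u) * _ ∈ _; rw [smul_mul_assoc]; exact Submodule.smul_mem _ _ hu)
      (hp trivial)
    obtain ⟨n, x, rfl⟩ := ht
    refine Submodule.subset_span ⟨n + 1, Fin.snoc x (B k), ?_⟩
    rw [Fin.prod_univ_castSucc]
    simp [Fin.snoc_castSucc, Fin.snoc_last, linB_basis]


variable (β : MvPolynomial ι K ≃ₗ[K] UniversalEnvelopingAlgebra K g)
    (Dact : g → Derivation K (MvPolynomial ι K) (MvPolynomial ι K))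

lemma linD (hD : ∀ (a : g) (i : ι),
      Dact a (MvPolynomial.X i) = ∑ j, B.repr ⁅a, B i⁆ j • MvPolynomial.X j)
    (a : g) (y : g) : Dact a (linB B y) = linB B ⁅a, y⁆ := by
  classical
  have : ((Dact a).toLinearMap.comp (linB B) : g →ₗ[K] MvPolynomial ι K)
      = (linB B).comp (LieAlgebra.ad K g a) := by
    refine B.ext fun i => ?_
    simp only [LinearMap.comp_apply, linB_basis, LieAlgebra.ad_apply]
    rw [linB_apply]
    exact hD a i
  have h := LinearMap.congr_fun this y
  simpa using h

lemma key_equivariant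
    (hβ : ∀ (n : ℕ) (x : Fin n → g),
      β (∏ i, ∑ j, B.repr (x i) j • MvPolynomial.X j) =
        ((Nat.factorial n : K))⁻¹ •
          ∑ σ : Equiv.Perm (Fin n),
            (List.ofFn fun i => UniversalEnvelopingAlgebra.ι K (x (σ i))).prod)
    (hD : ∀ (a : g) (i : ι),
      Dact a (MvPolynomial.X i) = ∑ j, B.repr ⁅a, B i⁆ j • MvPolynomial.X j)
    (a : g) (n : ℕ) (x : Fin n → g) :
    β (Dact a (∏ i, linB B (x i)))
      = UniversalEnvelopingAlgebra.ι K a * β (∏ i, linB B (x i))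
        - β (∏ i, linB B (x i)) * UniversalEnvelopingAlgebra.ι K a := by
  classical
  set ιU := UniversalEnvelopingAlgebra.ι K (L := g)
  have hβ' : ∀ (m : ℕ) (y : Fin m → g),
      β (∏ i, linB B (y i)) = ((Nat.factorial m : K))⁻¹ •
        ∑ σ : Equiv.Perm (Fin m), (List.ofFn fun i => ιU (y (σ i))).prod := by
    intro m y
    simp only [linB_apply]
    exact hβ m y
  have hL : Dact a (∏ i, linB B (x i))
      = ∑ m, ∏ j, linB B (Function.update x m ⁅a, x m⁆ j) := by
    rw [deriv_prod]
    refine Finset.sum_congr rfl fun m _ => Finset.prod_congr rfl fun j _ => ?_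
    rw [linD B Dact hD a (x m)]
    exact (Function.apply_update (fun _ y => linB B y) x m ⁅a, x m⁆ j).symm
  rw [hL, map_sum]
  have hLHS : ∀ m : Fin n, β (∏ j, linB B (Function.update x m ⁅a, x m⁆ j))
      = ((Nat.factorial n : K))⁻¹ • ∑ σ : Equiv.Perm (Fin n),
          (List.ofFn fun j => ιU (Function.update x m ⁅a, x m⁆ (σ j))).prod :=
    fun m => hβ' n (Function.update x m ⁅a, x m⁆)
  simp only [hLHS]
  -- RHS
  rw [hβ' n x, mul_smul_comm, smul_mul_assoc, ← smul_sub, Finset.mul_sum, Finset.sum_mul,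
    ← Finset.sum_sub_distrib]
  have hcomm : ∀ b : g, ιU a * ιU b - ιU b * ιU a = ιU ⁅a, b⁆ := by
    intro b
    letI : LieRing (UniversalEnvelopingAlgebra K g) := LieRing.ofAssociativeRing
    rw [LieHom.map_lie, Ring.lie_def]
  have hupd : ∀ (σ : Equiv.Perm (Fin n)) (i j : Fin n),
      Function.update (fun j => ιU (x (σ j))) i (ιU ⁅a, x (σ i)⁆) j
        = ιU (Function.update x (σ i) ⁅a, x (σ i)⁆ (σ j)) := by
    intro σ i j
    by_cases h : j = i
    · subst h; simp
    · rw [Function.update_of_ne h, Function.update_of_ne (σ.injective.ne h)]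
  have hterm : ∀ σ : Equiv.Perm (Fin n),
      ιU a * (List.ofFn fun j => ιU (x (σ j))).prod
        - (List.ofFn fun j => ιU (x (σ j))).prod * ιU a
      = ∑ m, (List.ofFn fun j => ιU (Function.update x m ⁅a, x m⁆ (σ j))).prod := by
    intro σ
    rw [comm_expand n (fun j => ιU (x (σ j))) (ιU a)]
    rw [← Equiv.sum_comp σ
      (fun m => (List.ofFn fun j => ιU (Function.update x m ⁅a, x m⁆ (σ j))).prod)]
    refine Finset.sum_congr rfl fun i _ => ?_
    congr 1
    congr 1
    funext j
    rw [← hupd σ i j, hcomm (x (σ i))]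
  simp only [hterm]
  rw [Finset.sum_comm, Finset.smul_sum]

lemma beta_equivariant
    (hβ : ∀ (n : ℕ) (x : Fin n → g),
      β (∏ i, ∑ j, B.repr (x i) j • MvPolynomial.X j) =
        ((Nat.factorial n : K))⁻¹ •
          ∑ σ : Equiv.Perm (Fin n),
            (List.ofFn fun i => UniversalEnvelopingAlgebra.ι K (x (σ i))).prod)
    (hD : ∀ (a : g) (i : ι),
      Dact a (MvPolynomial.X i) = ∑ j, B.repr ⁅a, B i⁆ j • MvPolynomial.X j)
    (a : g) (p : MvPolynomial ι K) :
    β (Dact a p) = UniversalEnvelopingAlgebra.ι K a * β p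
      - β p * UniversalEnvelopingAlgebra.ι K a := by
  classical
  set ιU := UniversalEnvelopingAlgebra.ι K (L := g)
  have hext : (β.toLinearMap.comp (Dact a).toLinearMap)
      = ((LinearMap.mulLeft K (ιU a) - LinearMap.mulRight K (ιU a)).comp β.toLinearMap) := by
    refine LinearMap.ext_on (span_prod_linB_top B) fun q hq => ?_
    obtain ⟨n, x, rfl⟩ := hq
    simpa [ιU] using key_equivariant B β Dact hβ hD a n x
  have h := LinearMap.congr_fun hext p
  simpa using h

end


/-- Let `g` be a finite-dimensional Lie algebra over a field `K` of
characteristic zero, `S(g)` identified with `MvPolynomial ι K` via a basis `B`, `β` the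
PBW symmetrization map and `Dact` the extended adjoint action on `S(g)` (a derivation for
each `a ∈ g`).  Then `β` restricts to a (linear) isomorphism from the invariants
`I = S(g)^g = {p | ∀ a, Dact a p = 0}` onto the center
`Z = U(g)^g = {u | ∀ a, a * u = u * a}`. -/
theorem symmetrization_bijOn_invariants_center
    {K : Type*} [Field K] [CharZero K]
    {g : Type*} [LieRing g] [LieAlgebra K g] [FiniteDimensional K g]
    {ι : Type*} [Fintype ι] (B : Module.Basis ι K g)
    (β : MvPolynomial ι K ≃ₗ[K] UniversalEnvelopingAlgebra K g)
    (hβ : ∀ (n : ℕ) (x : Fin n → g),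
      β (∏ i, ∑ j, B.repr (x i) j • MvPolynomial.X j) =
        ((Nat.factorial n : K))⁻¹ •
          ∑ σ : Equiv.Perm (Fin n),
            (List.ofFn fun i => UniversalEnvelopingAlgebra.ι K (x (σ i))).prod)
    (Dact : g → Derivation K (MvPolynomial ι K) (MvPolynomial ι K))
    (hD : ∀ (a : g) (i : ι),
      Dact a (MvPolynomial.X i) = ∑ j, B.repr ⁅a, B i⁆ j • MvPolynomial.X j) :
    Set.BijOn β {p : MvPolynomial ι K | ∀ a : g, Dact a p = 0}
      {u : UniversalEnvelopingAlgebra K g | ∀ a : g,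
        UniversalEnvelopingAlgebra.ι K a * u = u * UniversalEnvelopingAlgebra.ι K a} := by
  have heq := beta_equivariant B β Dact hβ hD
  refine ⟨fun p hp a => ?_, β.injective.injOn, fun u hu => ?_⟩
  · have h := heq a p
    rw [hp a, map_zero] at h
    exact (sub_eq_zero.mp h.symm)
  · refine ⟨β.symm u, fun a => ?_, by simp⟩
    apply β.injective
    rw [heq a (β.symm u), map_zero, β.apply_symm_apply, hu a, sub_self]
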